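/- Let X be a finite-dimensional real vector space and p an asymmetric norm on X. Then the following statements are equivalent: (1) p is right bounded; (2) there exists an asymmetric norm q on X equivalent to p which is 1-bounded; (3) there exists an asymmetric norm q on X equivalent to p such that B_1^q[0] is strongly compact; (4) X with the topology τ_p is strongly locally compact. -/

import Mathlib

open Pointwise Set

/-- An asymmetric norm on a real vector space `X`. -/
structure IsAsymmetricNorm {X : Type*} [AddCommGroup X] [Module ℝ X] (q : X → ℝ) : Prop where
  nonneg : ∀ x, 0 ≤ q x
  smul_eq : ∀ a : ℝ, 0 ≤ a → ∀ x, q (a • x) = a * q x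
  add_le : ∀ x y, q (x + y) ≤ q x + q y
  eq_zero : ∀ x, q x = 0 → q (-x) = 0 → x = 0

/-- The topology `τ_q` generated by the open balls of `q`. -/
def asymTop {X : Type*} [AddCommGroup X] [Module ℝ X] (q : X → ℝ) : TopologicalSpace X :=
  TopologicalSpace.generateFrom {U | ∃ x : X, ∃ ε : ℝ, 0 < ε ∧ U = {y | q (y - x) < ε}}

/-- The symmetrization `q^s` of `q`. -/
def symNorm {X : Type*} [AddCommGroup X] (q : X → ℝ) (x : X) : ℝ := max (q x) (q (-x))

/-- The cone `θ_q = {x : q x = 0}`. -/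
def theta {X : Type*} [AddCommGroup X] (q : X → ℝ) : Set X := {x | q x = 0}

/-- The closed ball `B_r^q[x] = {y : q (y - x) ≤ r}`. -/
def closedBallA {X : Type*} [AddCommGroup X] (q : X → ℝ) (x : X) (r : ℝ) : Set X :=
  {y | q (y - x) ≤ r}

/-- A set `K` is strongly compact (w.r.t. the asymmetric norm `q`) if there is a set `S`,
compact in the topology of the norm `q^s`, with `S ⊆ K ⊆ S + θ_q`. -/
def StronglyCompact {X : Type*} [AddCommGroup X] [Module ℝ X] (q : X → ℝ) (K : Set X) : Prop :=
  ∃ S : Set X, @IsCompact X (asymTop (symNorm q)) S ∧ S ⊆ K ∧ K ⊆ S + theta q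

/-- `q` is right bounded if `r • B_1^q[0] ⊆ B_1^{q^s}[0] + θ_q` for some `r > 0`. -/
def RightBounded {X : Type*} [AddCommGroup X] [Module ℝ X] (q : X → ℝ) : Prop :=
  ∃ r : ℝ, 0 < r ∧ r • closedBallA q 0 1 ⊆ closedBallA (symNorm q) 0 1 + theta q

/-- `q` is 1-bounded if `B_1^q[0] ⊆ B_1^{q^s}[0] + θ_q`. -/
def OneBounded {X : Type*} [AddCommGroup X] [Module ℝ X] (q : X → ℝ) : Prop :=
  closedBallA q 0 1 ⊆ closedBallA (symNorm q) 0 1 + theta q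

/-- Two asymmetric norms are equivalent if `κ·q ≤ p ≤ l·q` for some `κ, l > 0`. -/
def EquivNorms {X : Type*} [AddCommGroup X] (p q : X → ℝ) : Prop :=
  ∃ κ l : ℝ, 0 < κ ∧ 0 < l ∧ ∀ x, κ * q x ≤ p x ∧ p x ≤ l * q x

/-- `X` is strongly locally compact (w.r.t. `τ_q`) if every point has a local base of
strongly compact sets. -/
def StronglyLocallyCompact {X : Type*} [AddCommGroup X] [Module ℝ X] (q : X → ℝ) : Prop :=
  ∀ x : X, ∀ U ∈ @nhds X (asymTop q) x,
    ∃ K : Set X, StronglyCompact q K ∧ K ∈ @nhds X (asymTop q) x ∧ K ⊆ U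


set_option linter.unusedSectionVars false

section helpers

variable {X : Type*} [AddCommGroup X] [Module ℝ X] {p : X → ℝ}

lemma IsAsymmetricNorm.zero (hp : IsAsymmetricNorm p) : p 0 = 0 := by
  have := hp.smul_eq 0 le_rfl 0
  simpa using this

lemma symNorm_nonneg (hp : IsAsymmetricNorm p) (x : X) : 0 ≤ symNorm p x :=
  le_trans (hp.nonneg x) (le_max_left _ _)

lemma le_symNorm (x : X) : p x ≤ symNorm p x := le_max_left _ _

lemma symNorm_neg (x : X) : symNorm p (-x) = symNorm p x := by
  simp [symNorm, max_comm]

lemma symNorm_smul (hp : IsAsymmetricNorm p) (a : ℝ) (x : X) :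
    symNorm p (a • x) = |a| * symNorm p x := by
  rcases le_or_gt 0 a with ha | ha
  · rw [abs_of_nonneg ha]
    simp only [symNorm, ← smul_neg, hp.smul_eq a ha]
    rw [mul_max_of_nonneg _ _ ha]
  · have ha' : (0:ℝ) ≤ -a := by linarith
    rw [abs_of_neg ha]
    have h1 : a • x = (-a) • (-x) := by simp
    have h2 : -(a • x) = (-a) • x := by simp
    simp only [symNorm, h1, h2, hp.smul_eq (-a) ha']
    rw [← smul_neg, hp.smul_eq (-a) ha', mul_max_of_nonneg _ _ ha', max_comm]
    simp

lemma symNorm_add_le (hp : IsAsymmetricNorm p) (x y : X) :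
    symNorm p (x + y) ≤ symNorm p x + symNorm p y := by
  refine max_le ?_ ?_
  · exact le_trans (hp.add_le x y) (add_le_add (le_max_left _ _) (le_max_left _ _))
  · rw [neg_add]
    exact le_trans (hp.add_le (-x) (-y)) (add_le_add (le_max_right _ _) (le_max_right _ _))

/-- The normed group structure on `X` induced by `p^s`. -/
noncomputable abbrev asymNAG (p : X → ℝ) (hp : IsAsymmetricNorm p) : NormedAddCommGroup X :=
  AddGroupNorm.toNormedAddCommGroup
    { toFun := symNorm p
      map_zero' := by simp [symNorm, hp.zero]
      add_le' := symNorm_add_le hp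
      neg' := symNorm_neg
      eq_zero_of_map_eq_zero' := by
        intro x hx
        have h1 : p x = 0 := le_antisymm (hx ▸ le_max_left _ _) (hp.nonneg x)
        have h2 : p (-x) = 0 := le_antisymm (hx ▸ le_max_right _ _) (hp.nonneg _)
        exact hp.eq_zero x h1 h2 }

lemma asymNAG_norm (p : X → ℝ) (hp : IsAsymmetricNorm p) (x : X) :
    @norm X (asymNAG p hp).toNorm x = symNorm p x := rfl

/-- The normed space structure. -/
noncomputable abbrev asymNS (p : X → ℝ) (hp : IsAsymmetricNorm p) :
    @NormedSpace ℝ X _ (asymNAG p hp).toSeminormedAddCommGroup := by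
  letI := asymNAG p hp
  exact { toModule := inferInstance
          norm_smul_le := fun a x => by
            rw [show ‖a • x‖ = symNorm p (a • x) from rfl, symNorm_smul hp]
            exact le_of_eq rfl }

lemma asymTop_eq_norm {E : Type*} [SeminormedAddCommGroup E] [Module ℝ E] (n : E → ℝ)
    (hn : ∀ x, n x = ‖x‖) : asymTop n = (inferInstance : TopologicalSpace E) := by
  have hb : TopologicalSpace.IsTopologicalBasis
      {U : Set E | ∃ x : E, ∃ ε : ℝ, 0 < ε ∧ U = {y | n (y - x) < ε}} := by
    apply TopologicalSpace.isTopologicalBasis_of_isOpen_of_nhds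
    · rintro U ⟨x, ε, hε, rfl⟩
      have : {y | n (y - x) < ε} = Metric.ball x ε := by
        ext y; simp [Metric.mem_ball, dist_eq_norm, hn]
      rw [this]; exact Metric.isOpen_ball
    · intro x u hxu hu
      rcases Metric.isOpen_iff.1 hu x hxu with ⟨ε, hε, hball⟩
      refine ⟨{y | n (y - x) < ε}, ⟨x, ε, hε, rfl⟩, ?_, fun y hy => hball ?_⟩
      · simp [hn, hε]
      · rw [Metric.mem_ball, dist_eq_norm]
        simpa [hn] using hy
  exact hb.eq_generateFrom.symm

lemma ball_mem_nhds (hp : IsAsymmetricNorm p) (x : X) {ε : ℝ} (hε : 0 < ε) :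
    {y | p (y - x) < ε} ∈ @nhds X (asymTop p) x := by
  letI := asymTop p
  have hopen : IsOpen {y | p (y - x) < ε} :=
    TopologicalSpace.GenerateOpen.basic _ ⟨x, ε, hε, rfl⟩
  exact hopen.mem_nhds (by simp [hp.zero, hε])

lemma exists_ball_subset (hp : IsAsymmetricNorm p) {x : X} {U : Set X}
    (hU : U ∈ @nhds X (asymTop p) x) : ∃ ε > 0, {y | p (y - x) < ε} ⊆ U := by
  letI := asymTop p
  rcases mem_nhds_iff.1 hU with ⟨t, htU, hto, hxt⟩
  suffices h : ∀ s : Set X, TopologicalSpace.GenerateOpen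
      {U | ∃ x : X, ∃ ε : ℝ, 0 < ε ∧ U = {y | p (y - x) < ε}} s →
      ∀ z ∈ s, ∃ ε > 0, {y | p (y - z) < ε} ⊆ s by
    obtain ⟨ε, hε, hsub⟩ := h t hto x hxt
    exact ⟨ε, hε, hsub.trans htU⟩
  intro s hs
  induction hs with
  | basic u hu =>
    obtain ⟨z, ε, hε, rfl⟩ := hu
    intro w hw
    refine ⟨ε - p (w - z), by simpa using hw, fun y hy => ?_⟩
    have h1 : p (y - z) ≤ p (y - w) + p (w - z) := by
      have := hp.add_le (y - w) (w - z)
      rwa [sub_add_sub_cancel] at this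
    have h2 : p (y - w) < ε - p (w - z) := hy
    simp only [mem_setOf_eq]
    linarith
  | univ => exact fun z _ => ⟨1, one_pos, subset_univ _⟩
  | inter u v _ _ ihu ihv =>
    intro z hz
    obtain ⟨ε₁, hε₁, h₁⟩ := ihu z hz.1
    obtain ⟨ε₂, hε₂, h₂⟩ := ihv z hz.2
    exact ⟨min ε₁ ε₂, lt_min hε₁ hε₂,
      fun y hy => ⟨h₁ (show p (y - z) < ε₁ from lt_of_lt_of_le hy (min_le_left _ _)),
        h₂ (show p (y - z) < ε₂ from lt_of_lt_of_le hy (min_le_right _ _))⟩⟩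
  | sUnion S _ ih =>
    intro z hz
    obtain ⟨u, huS, hzu⟩ := hz
    obtain ⟨ε, hε, hsub⟩ := ih u huS z hzu
    exact ⟨ε, hε, hsub.trans (subset_sUnion_of_mem huS)⟩

lemma asym_continuous_of_le {E : Type*} [SeminormedAddCommGroup E] [Module ℝ E]
    (q : E → ℝ) (hq : IsAsymmetricNorm q) (C : ℝ) (hC0 : 0 ≤ C)
    (hC : ∀ x, q x ≤ C * ‖x‖) : Continuous q := by
  have : LipschitzWith C.toNNReal q := by
    apply LipschitzWith.of_dist_le_mul
    intro x y
    rw [Real.dist_eq, Real.coe_toNNReal C hC0, dist_eq_norm]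
    rw [abs_sub_le_iff]
    constructor
    · have h1 : q x ≤ q (x - y) + q y := by
        have := hq.add_le (x - y) y; rwa [sub_add_cancel] at this
      have := hC (x - y); linarith
    · have h1 : q y ≤ q (y - x) + q x := by
        have := hq.add_le (y - x) x; rwa [sub_add_cancel] at this
      have := hC (y - x)
      rw [norm_sub_rev] at this
      linarith
  exact this.continuous

end helpers

section implications

variable {X : Type*} [AddCommGroup X] [Module ℝ X] [FiniteDimensional ℝ X]

lemma theta_mem_zero {p : X → ℝ} (hp : IsAsymmetricNorm p) : (0:X) ∈ theta p := hp.zero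

lemma theta_smul {p : X → ℝ} (hp : IsAsymmetricNorm p) {a : ℝ} (ha : 0 ≤ a) {y : X}
    (hy : y ∈ theta p) : a • y ∈ theta p := by
  show p (a • y) = 0
  rw [hp.smul_eq a ha, hy]
  ring

lemma theta_add {p : X → ℝ} (hp : IsAsymmetricNorm p) {y z : X}
    (hy : y ∈ theta p) (hz : z ∈ theta p) : y + z ∈ theta p := by
  have h1 : p (y + z) ≤ p y + p z := hp.add_le y z
  have hy' : p y = 0 := hy
  have hz' : p z = 0 := hz
  exact le_antisymm (by rw [hy', hz'] at h1; linarith) (hp.nonneg _)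

lemma one_to_two (p : X → ℝ) (hp : IsAsymmetricNorm p) (h : RightBounded p) :
    ∃ q : X → ℝ, IsAsymmetricNorm q ∧ EquivNorms p q ∧ OneBounded q := by
  obtain ⟨r, hr, hrb⟩ := h
  letI := asymNAG p hp
  letI : NormedSpace ℝ X := asymNS p hp
  haveI : ProperSpace X := FiniteDimensional.proper ℝ X
  have hnorm : ∀ z : X, ‖z‖ = symNorm p z := fun _ => rfl
  have hθ0 : (0:X) ∈ theta p := theta_mem_zero hp
  have hθne : (theta p).Nonempty := ⟨0, hθ0⟩
  have hpcont : Continuous p := by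
    apply asym_continuous_of_le p hp 1 zero_le_one
    intro x; rw [one_mul, hnorm]; exact le_symNorm x
  have hθc : IsClosed (theta p) := isClosed_singleton.preimage hpcont
  set q : X → ℝ := fun x => Metric.infDist x (theta p) with hq_def
  have hatt : ∀ x : X, ∃ y ∈ theta p, q x = dist x y :=
    fun x => hθc.exists_infDist_eq_dist hθne x
  have hq_le : ∀ x y, y ∈ theta p → q x ≤ dist x y :=
    fun x y hy => Metric.infDist_le_dist_of_mem hy
  have hq0 : ∀ y ∈ theta p, q y = 0 := fun y hy => Metric.infDist_zero_of_mem hy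
  have hsmul_le : ∀ a : ℝ, 0 < a → ∀ x, q (a • x) ≤ a * q x := by
    intro a ha x
    obtain ⟨y, hy, hxy⟩ := hatt x
    calc q (a • x) ≤ dist (a • x) (a • y) := hq_le _ _ (theta_smul hp ha.le hy)
      _ = a * dist x y := by
          rw [dist_eq_norm, dist_eq_norm, ← smul_sub, hnorm, hnorm,
            symNorm_smul hp, abs_of_pos ha]
      _ = a * q x := by rw [hxy]
  have hsmul : ∀ a : ℝ, 0 ≤ a → ∀ x, q (a • x) = a * q x := by
    intro a ha x
    rcases eq_or_lt_of_le ha with rfl | ha'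
    · rw [zero_smul, hq0 0 hθ0, zero_mul]
    · refine le_antisymm (hsmul_le a ha' x) ?_
      have := hsmul_le a⁻¹ (inv_pos.2 ha') (a • x)
      rw [inv_smul_smul₀ ha'.ne'] at this
      calc a * q x ≤ a * (a⁻¹ * q (a • x)) :=
            mul_le_mul_of_nonneg_left this ha
        _ = q (a • x) := by field_simp
  have hq_asym : IsAsymmetricNorm q := by
    constructor
    · exact fun x => Metric.infDist_nonneg
    · exact hsmul
    · intro x y
      obtain ⟨s, hs, hxs⟩ := hatt x
      obtain ⟨t, ht, hyt⟩ := hatt y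
      calc q (x + y) ≤ dist (x + y) (s + t) := hq_le _ _ (theta_add hp hs ht)
        _ ≤ dist x s + dist y t := dist_add_add_le _ _ _ _
        _ = q x + q y := by rw [hxs, hyt]
    · intro x hx hnx
      obtain ⟨y, hy, hxy⟩ := hatt x
      have hxy0 : dist x y = 0 := by rw [← hxy, hx]
      have : x = y := by
        have := dist_eq_zero.1 hxy0; exact this
      subst this
      obtain ⟨z, hz, hxz⟩ := hatt (-x)
      have hxz0 : dist (-x) z = 0 := by rw [← hxz, hnx]
      have hzx : (-x) = z := dist_eq_zero.1 hxz0
      exact hp.eq_zero x hy (hzx ▸ hz)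
  have hple : ∀ x, p x ≤ q x := by
    intro x
    obtain ⟨y, hy, hxy⟩ := hatt x
    have h1 : p x ≤ p (x - y) + p y := by
      have := hp.add_le (x - y) y; rwa [sub_add_cancel] at this
    have hy' : p y = 0 := hy
    have h2 : p (x - y) ≤ symNorm p (x - y) := le_symNorm _
    rw [hxy, dist_eq_norm, hnorm]
    linarith
  have hrq : ∀ x, r * q x ≤ p x := by
    intro x
    by_cases hpx : p x = 0
    · have : q x = 0 := hq0 x hpx
      rw [this, hpx, mul_zero]
    · have hpx' : 0 < p x := lt_of_le_of_ne (hp.nonneg x) (Ne.symm hpx)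
      have hmem : (r * (p x)⁻¹) • x ∈ r • closedBallA p 0 1 := by
        refine ⟨(p x)⁻¹ • x, ?_, by simp [smul_smul]⟩
        show p ((p x)⁻¹ • x - 0) ≤ 1
        rw [sub_zero, hp.smul_eq _ (inv_nonneg.2 hpx'.le), inv_mul_cancel₀ hpx]
      obtain ⟨b, hb, t, ht, hbt⟩ := Set.mem_add.1 (hrb hmem)
      have hb' : symNorm p b ≤ 1 := by
        have : symNorm p (b - 0) ≤ 1 := hb
        rwa [sub_zero] at this
      have hqle : q ((r * (p x)⁻¹) • x) ≤ 1 := by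
        calc q ((r * (p x)⁻¹) • x) ≤ dist ((r * (p x)⁻¹) • x) t := hq_le _ _ ht
          _ = ‖b‖ := by rw [dist_eq_norm]; congr 1; rw [← hbt]; abel
          _ ≤ 1 := by rw [hnorm]; exact hb'
      rw [hsmul _ (by positivity)] at hqle
      have := mul_le_mul_of_nonneg_right hqle hpx'.le
      calc r * q x = r * (p x)⁻¹ * q x * p x := by field_simp
        _ ≤ 1 * p x := this
        _ = p x := one_mul _
  refine ⟨q, hq_asym, ⟨r, 1, hr, one_pos, fun x => ⟨hrq x, by rw [one_mul]; exact hple x⟩⟩, ?_⟩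
  -- OneBounded q
  intro x hx
  have hx' : q x ≤ 1 := by
    have : q (x - 0) ≤ 1 := hx
    rwa [sub_zero] at this
  obtain ⟨y, hy, hxy⟩ := hatt x
  have hdist : dist x y ≤ 1 := by rw [← hxy]; exact hx'
  refine Set.mem_add.2 ⟨x - y, ?_, y, ?_, by abel⟩
  · show symNorm q ((x - y) - 0) ≤ 1
    rw [sub_zero]
    refine max_le ?_ ?_
    · calc q (x - y) ≤ dist (x - y) 0 := hq_le _ _ hθ0
        _ = ‖x - y‖ := by rw [dist_zero_right]
        _ ≤ 1 := by rw [← dist_eq_norm]; exact hdist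
    · calc q (-(x - y)) ≤ dist (-(x - y)) 0 := hq_le _ _ hθ0
        _ = ‖x - y‖ := by rw [dist_zero_right, norm_neg]
        _ ≤ 1 := by rw [← dist_eq_norm]; exact hdist
  · show q y = 0
    exact hq0 y hy

lemma theta_eq_of_equiv {p q : X → ℝ} (h : EquivNorms p q) (hp : IsAsymmetricNorm p)
    (hq : IsAsymmetricNorm q) : theta q = theta p := by
  obtain ⟨κ, l, hκ, hl, hpq⟩ := h
  ext x
  constructor
  · intro hx
    have h1 : p x ≤ l * q x := (hpq x).2
    have hx' : q x = 0 := hx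
    exact le_antisymm (by rw [hx'] at h1; linarith) (hp.nonneg x)
  · intro hx
    have h1 : κ * q x ≤ p x := (hpq x).1
    have hx' : p x = 0 := hx
    have := hq.nonneg x
    show q x = 0
    nlinarith
lemma two_to_three (p : X → ℝ) (hp : IsAsymmetricNorm p)
    (h : ∃ q : X → ℝ, IsAsymmetricNorm q ∧ EquivNorms p q ∧ OneBounded q) :
    ∃ q : X → ℝ, IsAsymmetricNorm q ∧ EquivNorms p q ∧
      StronglyCompact p (closedBallA q 0 1) := by
  obtain ⟨q, hq, heq, h1b⟩ := h
  refine ⟨q, hq, heq, ?_⟩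
  obtain ⟨κ, l, hκ, hl, hpq⟩ := heq
  letI := asymNAG p hp
  letI : NormedSpace ℝ X := asymNS p hp
  haveI : ProperSpace X := FiniteDimensional.proper ℝ X
  have hnorm : ∀ z : X, ‖z‖ = symNorm p z := fun _ => rfl
  have hθ : theta q = theta p := theta_eq_of_equiv ⟨κ, l, hκ, hl, hpq⟩ hp hq
  have hqcont : Continuous q := by
    apply asym_continuous_of_le q hq κ⁻¹ (inv_nonneg.2 hκ.le)
    intro x
    have h1 : κ * q x ≤ p x := (hpq x).1
    have h2 : p x ≤ symNorm p x := le_symNorm x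
    rw [hnorm]
    have h3 : κ * q x ≤ symNorm p x := le_trans h1 h2
    calc q x = κ⁻¹ * (κ * q x) := by field_simp
      _ ≤ κ⁻¹ * symNorm p x := mul_le_mul_of_nonneg_left h3 (inv_nonneg.2 hκ.le)
  set S : Set X := closedBallA q 0 1 ∩ closedBallA (symNorm q) 0 1 with hS_def
  refine ⟨S, ?_, inter_subset_left, ?_⟩
  · -- compactness
    rw [asymTop_eq_norm (symNorm p) (fun z => (hnorm z).symm)]
    apply IsCompact.of_isClosed_subset (isCompact_closedBall 0 l)
    · apply IsClosed.inter
      · have : Continuous fun y : X => q (y - 0) :=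
          hqcont.comp (continuous_id.sub continuous_const)
        exact isClosed_le this continuous_const
      · have hc : Continuous fun y : X => symNorm q (y - 0) := by
          apply Continuous.max
          · exact hqcont.comp (continuous_id.sub continuous_const)
          · exact hqcont.comp (((continuous_id.sub continuous_const)).neg)
        exact isClosed_le hc continuous_const
    · intro x hx
      have hx2 : symNorm q (x - 0) ≤ 1 := hx.2
      rw [sub_zero] at hx2
      have hqs : q x ≤ 1 := le_trans (le_max_left _ _) hx2
      have hqs' : q (-x) ≤ 1 := le_trans (le_max_right _ _) hx2
      rw [Metric.mem_closedBall, dist_zero_right, hnorm]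
      refine max_le ?_ ?_
      · calc p x ≤ l * q x := (hpq x).2
          _ ≤ l * 1 := mul_le_mul_of_nonneg_left hqs hl.le
          _ = l := mul_one l
      · calc p (-x) ≤ l * q (-x) := (hpq (-x)).2
          _ ≤ l * 1 := mul_le_mul_of_nonneg_left hqs' hl.le
          _ = l := mul_one l
  · intro x hx
    obtain ⟨b, hb, t, ht, hbt⟩ := Set.mem_add.1 (h1b hx)
    refine Set.mem_add.2 ⟨b, ⟨?_, hb⟩, t, hθ ▸ ht, hbt⟩
    show q (b - 0) ≤ 1
    have hb' : symNorm q (b - 0) ≤ 1 := hb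
    exact le_trans (le_symNorm _) hb'

lemma three_to_four (p : X → ℝ) (hp : IsAsymmetricNorm p)
    (h : ∃ q : X → ℝ, IsAsymmetricNorm q ∧ EquivNorms p q ∧
      StronglyCompact p (closedBallA q 0 1)) :
    StronglyLocallyCompact p := by
  obtain ⟨q, hq, ⟨κ, l, hκ, hl, hpq⟩, S, hScpt, hSsub, hKsub⟩ := h
  intro x U hU
  obtain ⟨δ, hδ, hball⟩ := exists_ball_subset hp hU
  set c : ℝ := δ / (2 * l) with hc_def
  have hc : 0 < c := by positivity
  set K : Set X := {y | q (y - x) ≤ c} with hK_def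
  have hKU : K ⊆ U := by
    intro y hy
    apply hball
    have h1 : p (y - x) ≤ l * q (y - x) := (hpq (y - x)).2
    have h2 : q (y - x) ≤ c := hy
    have h3 : l * q (y - x) ≤ l * c := mul_le_mul_of_nonneg_left h2 hl.le
    have h4 : l * c = δ / 2 := by rw [hc_def]; field_simp
    show p (y - x) < δ
    rw [h4] at h3
    linarith
  refine ⟨K, ?_, ?_, hKU⟩
  · -- strongly compact
    letI := asymNAG p hp
    letI : NormedSpace ℝ X := asymNS p hp
    have hnorm : ∀ z : X, ‖z‖ = symNorm p z := fun _ => rfl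
    refine ⟨(fun s => x + c • s) '' S, ?_, ?_, ?_⟩
    · rw [asymTop_eq_norm (symNorm p) (fun z => (hnorm z).symm)] at hScpt ⊢
      exact hScpt.image (continuous_const.add (continuous_id.const_smul c))
    · rintro _ ⟨s, hs, rfl⟩
      show q ((x + c • s) - x) ≤ c
      have hqs : q (s - 0) ≤ 1 := hSsub hs
      rw [sub_zero] at hqs
      have : (x + c • s) - x = c • s := by abel
      rw [this, hq.smul_eq c hc.le]
      calc c * q s ≤ c * 1 := mul_le_mul_of_nonneg_left hqs hc.le
        _ = c := mul_one c
    · intro y hy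
      have hw : c⁻¹ • (y - x) ∈ closedBallA q 0 1 := by
        show q (c⁻¹ • (y - x) - 0) ≤ 1
        rw [sub_zero, hq.smul_eq _ (inv_nonneg.2 hc.le)]
        have h2 : q (y - x) ≤ c := hy
        calc c⁻¹ * q (y - x) ≤ c⁻¹ * c := mul_le_mul_of_nonneg_left h2 (inv_nonneg.2 hc.le)
          _ = 1 := inv_mul_cancel₀ hc.ne'
      obtain ⟨s, hs, t, ht, hst⟩ := Set.mem_add.1 (hKsub hw)
      refine Set.mem_add.2 ⟨x + c • s, ⟨s, hs, rfl⟩, c • t, theta_smul hp hc.le ht, ?_⟩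
      have hcw : c • (c⁻¹ • (y - x)) = y - x := smul_inv_smul₀ hc.ne' _
      calc (x + c • s) + c • t = x + c • (s + t) := by rw [smul_add]; abel
        _ = x + c • (c⁻¹ • (y - x)) := by rw [hst]
        _ = x + (y - x) := by rw [hcw]
        _ = y := by abel
  · -- neighborhood
    have hsub : {y | p (y - x) < κ * c} ⊆ K := by
      intro y hy
      have h1 : κ * q (y - x) ≤ p (y - x) := (hpq (y - x)).1
      have h2 : p (y - x) < κ * c := hy
      show q (y - x) ≤ c
      nlinarith
    exact Filter.mem_of_superset (ball_mem_nhds hp x (by positivity)) hsub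

lemma four_to_one (p : X → ℝ) (hp : IsAsymmetricNorm p)
    (h : StronglyLocallyCompact p) : RightBounded p := by
  obtain ⟨K, ⟨S, hScpt, hSK, hKS⟩, hKnhds, -⟩ := h 0 univ Filter.univ_mem
  obtain ⟨δ, hδ, hball⟩ := exists_ball_subset hp hKnhds
  letI := asymNAG p hp
  letI : NormedSpace ℝ X := asymNS p hp
  have hnorm : ∀ z : X, ‖z‖ = symNorm p z := fun _ => rfl
  rw [asymTop_eq_norm (symNorm p) (fun z => (hnorm z).symm)] at hScpt
  obtain ⟨M, hM⟩ := hScpt.isBounded.subset_closedBall 0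
  set M' : ℝ := max M 1 with hM'_def
  have hM' : 0 < M' := lt_of_lt_of_le one_pos (le_max_right _ _)
  have hSM : S ⊆ Metric.closedBall 0 M' :=
    hM.trans (Metric.closedBall_subset_closedBall (le_max_left _ _))
  refine ⟨δ / (2 * M'), by positivity, ?_⟩
  rintro _ ⟨w, hw, rfl⟩
  have hpw : p (w - 0) ≤ 1 := hw
  rw [sub_zero] at hpw
  have h2 : (δ / 2) • w ∈ K := by
    apply hball
    show p ((δ / 2) • w - 0) < δ
    rw [sub_zero, hp.smul_eq _ (by positivity)]
    calc δ / 2 * p w ≤ δ / 2 * 1 := mul_le_mul_of_nonneg_left hpw (by positivity)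
      _ = δ / 2 := mul_one _
      _ < δ := by linarith
  obtain ⟨b, hb, t, ht, hbt⟩ := Set.mem_add.1 (hKS h2)
  have hkey : (δ / (2 * M')) • w = M'⁻¹ • b + M'⁻¹ • t := by
    have : M'⁻¹ • ((δ / 2) • w) = (δ / (2 * M')) • w := by
      rw [smul_smul, inv_mul_eq_div, div_div]
    rw [← this, ← hbt, smul_add]
  show (δ / (2 * M')) • w ∈ closedBallA (symNorm p) 0 1 + theta p
  rw [hkey]
  refine Set.mem_add.2 ⟨M'⁻¹ • b, ?_, M'⁻¹ • t, theta_smul hp (inv_nonneg.2 hM'.le) ht, rfl⟩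
  show symNorm p (M'⁻¹ • b - 0) ≤ 1
  rw [sub_zero, ← hnorm, norm_smul]
  have hbM : ‖b‖ ≤ M' := by
    have := hSM hb
    rwa [Metric.mem_closedBall, dist_zero_right] at this
  rw [norm_inv, Real.norm_of_nonneg hM'.le]
  calc M'⁻¹ * ‖b‖ ≤ M'⁻¹ * M' := mul_le_mul_of_nonneg_left hbM (inv_nonneg.2 hM'.le)
    _ = 1 := inv_mul_cancel₀ hM'.ne'

end implications

theorem statement14 {X : Type*} [AddCommGroup X] [Module ℝ X] [FiniteDimensional ℝ X]
    (p : X → ℝ) (hp : IsAsymmetricNorm p) :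
    List.TFAE [
      RightBounded p,
      ∃ q : X → ℝ, IsAsymmetricNorm q ∧ EquivNorms p q ∧ OneBounded q,
      ∃ q : X → ℝ, IsAsymmetricNorm q ∧ EquivNorms p q ∧
        StronglyCompact p (closedBallA q 0 1),
      StronglyLocallyCompact p ] := by
  tfae_have 1 → 2 := one_to_two p hp
  tfae_have 2 → 3 := two_to_three p hp
  tfae_have 3 → 4 := three_to_four p hp
  tfae_have 4 → 1 := four_to_one p hp
  tfae_finish
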